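/- Let X be an ℝ^d-valued random variable and S_n = X_1 + ⋯ + X_n the sum of n independent copies of X, with characteristic function Ψ(s) = E[e^{i s·X}]. Then for all n ≥ 1 and x ∈ ℝ^d, P(S_n ∈ Π_1(x)) ≤ Re ∫_{ℝ^d} e^{-i s·x}·r(s)·Ψ(s)^n ds. -/

import Mathlib

open MeasureTheory Filter
open scoped RealInnerProductSpace

section AuxLemmas

open Complex intervalIntegral ProbabilityTheory

/-- The (unnormalized) sinc function. -/
noncomputable def mysinc (s : ℝ) : ℝ := if s = 0 then 1 else Real.sin s / s

lemma mysinc_cont : Continuous mysinc := by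
  rw [continuous_iff_continuousAt]
  intro a
  rcases eq_or_ne a 0 with rfl | ha
  · have h1 : Tendsto (fun s : ℝ => Real.sin s / s) (nhdsWithin 0 {(0:ℝ)}ᶜ) (nhds 1) := by
      have := (Real.hasDerivAt_sin 0)
      rw [hasDerivAt_iff_tendsto_slope] at this
      simp only [Real.cos_zero] at this
      refine this.congr (fun s => ?_)
      simp [slope, Real.sin_zero, div_eq_inv_mul]
    have h2 : Tendsto mysinc (nhdsWithin 0 {(0:ℝ)}ᶜ) (nhds 1) := by
      refine h1.congr' ?_
      filter_upwards [self_mem_nhdsWithin] with s hs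
      simp [mysinc, Set.mem_compl_singleton_iff.1 hs]
    have h3 : Tendsto mysinc (pure (0:ℝ)) (nhds 1) := by
      simpa [mysinc] using tendsto_pure_nhds mysinc 0 |>.congr (fun _ => rfl)
    unfold ContinuousAt
    have : mysinc 0 = 1 := by simp [mysinc]
    rw [this, ← nhdsNE_sup_pure]
    exact Tendsto.sup h2 (by simpa [mysinc] using h3)
  · have : ContinuousAt (fun s => Real.sin s / s) a :=
      (Real.continuous_sin.continuousAt).div continuousAt_id ha
    refine this.congr ?_
    filter_upwards [isOpen_compl_singleton.mem_nhds ha] with s hs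
    simp [mysinc, Set.mem_compl_singleton_iff.1 hs]

open scoped FourierTransform in
lemma my_inversion (γ₀ g : ℝ → ℝ) (hγcont : Continuous γ₀) (hγint : Integrable γ₀)
    (hγhat : ∀ ξ : ℝ, (∫ x : ℝ, Complex.exp (-((ξ : ℂ) * (x : ℂ)) * Complex.I) * (γ₀ x : ℂ))
      = (g ξ : ℂ))
    (hgcont : Continuous g) (hgK : HasCompactSupport g) (u : ℝ) :
    (γ₀ u : ℂ) = (2 * Real.pi)⁻¹ • ∫ s : ℝ, (g s : ℂ) * Complex.exp (s * u * Complex.I) := by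
  set f : ℝ → ℂ := Complex.ofReal ∘ γ₀ with hf
  have hfint : Integrable f := hγint.ofReal
  have hFg : ∀ ξ : ℝ, 𝓕 f ξ = (g (2 * Real.pi * ξ) : ℂ) := by
    intro ξ
    rw [Real.fourier_eq']
    rw [← hγhat (2 * Real.pi * ξ)]
    refine integral_congr_ae (Eventually.of_forall fun x => ?_)
    simp only [smul_eq_mul, hf, Function.comp_apply]
    have hxi : ((-2 * Real.pi * (inner ℝ x ξ : ℝ) : ℝ) : ℂ) * Complex.I
        = -(((2 * Real.pi * ξ : ℝ) : ℂ) * (x : ℂ)) * Complex.I := by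
      have h : (inner ℝ x ξ : ℝ) = x * ξ := Real.inner_apply x ξ
      rw [h]; push_cast; ring
    rw [hxi, mul_comm]
  have hgint : Integrable g := hgcont.integrable_of_hasCompactSupport hgK
  have hFint : Integrable (𝓕 f) := by
    have : Integrable (fun ξ : ℝ => (g (2 * Real.pi * ξ) : ℂ)) := by
      exact (hgint.comp_mul_left' (by positivity : (2*Real.pi : ℝ) ≠ 0)).ofReal
    exact this.congr (Eventually.of_forall fun ξ => (hFg ξ).symm)
  have hinv := (Complex.continuous_ofReal.comp hγcont).fourierInv_fourier_eq hfint hFint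
  have h1 : f u = 𝓕⁻ (𝓕 f) u := by rw [hf, hinv]
  rw [Real.fourierInv_eq'] at h1
  have h2 : (∫ ξ : ℝ, Complex.exp ((↑(2 * Real.pi * (inner ℝ ξ u : ℝ)) * Complex.I)) • 𝓕 f ξ)
      = ∫ ξ : ℝ, (fun s : ℝ => (g s : ℂ) * Complex.exp (s * u * Complex.I)) (2 * Real.pi * ξ) := by
    refine integral_congr_ae (Eventually.of_forall fun ξ => ?_)
    simp only [hFg ξ, smul_eq_mul]
    have hxi : ((2 * Real.pi * (inner ℝ ξ u : ℝ) : ℝ) : ℂ) * Complex.I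
        = ((2 * Real.pi * ξ : ℝ) : ℂ) * (u : ℂ) * Complex.I := by
      have h : (inner ℝ ξ u : ℝ) = ξ * u := Real.inner_apply ξ u
      rw [h]; push_cast; ring
    rw [hxi, mul_comm]
  rw [h2, MeasureTheory.Measure.integral_comp_mul_left
      (fun s : ℝ => (g s : ℂ) * Complex.exp (s * u * Complex.I)) (2 * Real.pi)] at h1
  rw [_root_.abs_of_nonneg (by positivity : (0:ℝ) ≤ (2 * Real.pi)⁻¹)] at h1
  exact h1

lemma my_key (γ₀ g r₀ : ℝ → ℝ) (hγcont : Continuous γ₀) (hγint : Integrable γ₀)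
    (hγhat : ∀ ξ : ℝ, (∫ x : ℝ, Complex.exp (-((ξ : ℂ) * (x : ℂ)) * Complex.I) * (γ₀ x : ℂ))
      = (g ξ : ℂ))
    (hgcont : Continuous g) (hgK : HasCompactSupport g)
    (hr₀ : ∀ s : ℝ, s ≠ 0 → r₀ s = (1 / (2 * Real.pi)) * (Real.sin s / s) * g s)
    (a : ℝ) :
    (((1:ℝ)/2 : ℝ) : ℂ) * ∫ t in Set.Ioc (a-1) (a+1), (γ₀ t : ℂ)
      = ∫ s : ℝ, (r₀ s : ℂ) * Complex.exp ((s : ℂ) * (a : ℂ) * Complex.I) := by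
  have hgint : Integrable g := hgcont.integrable_of_hasCompactSupport hgK
  have h1 : (∫ t in Set.Ioc (a-1) (a+1), (γ₀ t : ℂ))
      = ∫ t in Set.Ioc (a-1) (a+1),
          (2 * Real.pi)⁻¹ • ∫ s : ℝ, (g s : ℂ) * Complex.exp ((s:ℂ) * (t:ℂ) * Complex.I) :=
    integral_congr_ae (Eventually.of_forall fun t =>
      my_inversion γ₀ g hγcont hγint hγhat hgcont hgK t)
  rw [h1, MeasureTheory.integral_smul]
  -- Fubini
  have hcont : Continuous (fun z : ℝ × ℝ => (g z.2 : ℂ) * Complex.exp ((z.2:ℂ) * (z.1:ℂ) * Complex.I)) := by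
    apply Continuous.mul
    · exact Complex.continuous_ofReal.comp (hgcont.comp continuous_snd)
    · exact Complex.continuous_exp.comp
        (((Complex.continuous_ofReal.comp continuous_snd).mul
          (Complex.continuous_ofReal.comp continuous_fst)).mul continuous_const)
  have hint : Integrable (Function.uncurry fun t s : ℝ =>
      (g s : ℂ) * Complex.exp ((s:ℂ) * (t:ℂ) * Complex.I))
      ((volume.restrict (Set.Ioc (a-1) (a+1))).prod volume) := by
    have hdom : Integrable (fun z : ℝ × ℝ => (1:ℝ) * |g z.2|)
        ((volume.restrict (Set.Ioc (a-1) (a+1))).prod volume) := by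
      exact Integrable.mul_prod (f := fun _ : ℝ => (1:ℝ)) (g := fun s : ℝ => |g s|)
        (integrableOn_const measure_Ioc_lt_top.ne) hgint.abs
    refine hdom.mono' (hcont.aestronglyMeasurable) ?_
    refine Eventually.of_forall fun z => ?_
    simp only [Function.uncurry]
    rw [norm_mul]
    have h2 : ((z.2:ℂ) * (z.1:ℂ) * Complex.I) = ((z.2 * z.1 : ℝ) : ℂ) * Complex.I := by push_cast; ring
    rw [h2]
    rw [Complex.norm_exp_ofReal_mul_I, Complex.norm_real]
    simp [abs_mul]
  rw [MeasureTheory.integral_integral_swap hint]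
  rw [Complex.real_smul, ← MeasureTheory.integral_const_mul, ← MeasureTheory.integral_const_mul]
  refine integral_congr_ae ?_
  have hae : ∀ᵐ s : ℝ, s ≠ 0 := by
    have : ({(0:ℝ)} : Set ℝ)ᶜ ∈ ae (volume : Measure ℝ) :=
      compl_mem_ae_iff.2 (measure_singleton 0)
    filter_upwards [this] with s hs using hs
  filter_upwards [hae] with s hs
  -- pull constant g s out of the t-integral
  rw [MeasureTheory.integral_const_mul]
  -- compute the inner integral over Ioc
  have hIoc : (∫ t in Set.Ioc (a-1) (a+1), Complex.exp ((s:ℂ) * (t:ℂ) * Complex.I))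
      = (Complex.exp ((s:ℂ)*Complex.I*(a+1)) - Complex.exp ((s:ℂ)*Complex.I*(a-1)))
          / ((s:ℂ)*Complex.I) := by
    have hle : (a - 1 : ℝ) ≤ a + 1 := by linarith
    rw [← integral_of_le hle]
    have hc : ((s:ℂ) * Complex.I) ≠ 0 :=
      mul_ne_zero (Complex.ofReal_ne_zero.2 hs) Complex.I_ne_zero
    rw [show ((Complex.exp ((s:ℂ)*Complex.I*(a+1)) - Complex.exp ((s:ℂ)*Complex.I*(a-1))) / ((s:ℂ)*Complex.I))
        = (Complex.exp (((s:ℂ)*Complex.I) * ((a:ℝ)+1:ℝ)) - Complex.exp (((s:ℂ)*Complex.I) * ((a:ℝ)-1:ℝ))) / ((s:ℂ)*Complex.I) by push_cast; ring_nf]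
    rw [← integral_exp_mul_complex (a := a - 1) (b := a + 1) hc]
    refine integral_congr fun t _ => ?_
    push_cast
    ring_nf
  rw [hIoc, hr₀ s hs]
  -- now a pure computation
  have hea : Complex.exp ((s:ℂ)*Complex.I*((a:ℂ)+1)) = Complex.exp ((s:ℂ)*(a:ℂ)*Complex.I) * Complex.exp ((s:ℂ)*Complex.I) := by
    rw [← Complex.exp_add]; ring_nf
  have heb : Complex.exp ((s:ℂ)*Complex.I*((a:ℂ)-1)) = Complex.exp ((s:ℂ)*(a:ℂ)*Complex.I) * Complex.exp (-((s:ℂ)*Complex.I)) := by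
    rw [← Complex.exp_add]; ring_nf
  have hsin : Complex.exp ((s:ℂ)*Complex.I) - Complex.exp (-((s:ℂ)*Complex.I)) = 2 * Complex.sin (s:ℂ) * Complex.I := by
    rw [Complex.exp_mul_I]
    have : -((s:ℂ)*Complex.I) = (-(s:ℂ)) * Complex.I := by ring
    rw [this, Complex.exp_mul_I]
    rw [Complex.cos_neg, Complex.sin_neg]
    ring
  have hs' : (s:ℂ) ≠ 0 := Complex.ofReal_ne_zero.2 hs
  have hpi : ((Real.pi : ℂ)) ≠ 0 := Complex.ofReal_ne_zero.2 Real.pi_ne_zero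
  push_cast
  rw [hea, heb, ← mul_sub, hsin]
  field_simp

lemma my_indep_integral_mul {Ω : Type*} [MeasurableSpace Ω] {μ : Measure Ω}
    [IsProbabilityMeasure μ] {f g : Ω → ℂ} (h : IndepFun f g μ)
    (hfm : AEStronglyMeasurable f μ) (hgm : AEStronglyMeasurable g μ)
    (hfb : ∀ ω, ‖f ω‖ ≤ 1) (hgb : ∀ ω, ‖g ω‖ ≤ 1) :
    ∫ ω, f ω * g ω ∂μ = (∫ ω, f ω ∂μ) * ∫ ω, g ω ∂μ := by
  have hfint : Integrable f μ := by
    refine Integrable.mono' (integrable_const 1) hfm (Eventually.of_forall hfb)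
  have hgint : Integrable g μ := by
    refine Integrable.mono' (integrable_const 1) hgm (Eventually.of_forall hgb)
  have hfgint : Integrable (fun ω => f ω * g ω) μ := by
    refine Integrable.bdd_mul (c := 1) hgint hfm (Eventually.of_forall hfb)
  have hre : ∀ z w : ℂ, (z * w).re = z.re * w.re - z.im * w.im := fun z w => Complex.mul_re z w
  have him : ∀ z w : ℂ, (z * w).im = z.re * w.im + z.im * w.re := fun z w => Complex.mul_im z w
  have hfr : AEStronglyMeasurable (fun ω => (f ω).re) μ := hfm.re
  have hfi : AEStronglyMeasurable (fun ω => (f ω).im) μ := hfm.im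
  have hgr : AEStronglyMeasurable (fun ω => (g ω).re) μ := hgm.re
  have hgi : AEStronglyMeasurable (fun ω => (g ω).im) μ := hgm.im
  have hintmul : ∀ (p : Ω → ℝ) (q : Ω → ℝ), AEStronglyMeasurable p μ → AEStronglyMeasurable q μ →
      (∀ ω, ‖p ω‖ ≤ 1) → (∀ ω, ‖q ω‖ ≤ 1) → Integrable (fun ω => p ω * q ω) μ := by
    intro p q hp hq hpb hqb
    refine Integrable.mono' (integrable_const 1) (hp.mul hq) (Eventually.of_forall fun ω => ?_)
    rw [norm_mul]
    exact mul_le_one₀ (hpb ω) (norm_nonneg _) (hqb ω)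
  have hfrb : ∀ ω, ‖(f ω).re‖ ≤ 1 := fun ω => le_trans (by simpa using Complex.abs_re_le_norm (f ω)) (hfb ω)
  have hfib : ∀ ω, ‖(f ω).im‖ ≤ 1 := fun ω => le_trans (by simpa using Complex.abs_im_le_norm (f ω)) (hfb ω)
  have hgrb : ∀ ω, ‖(g ω).re‖ ≤ 1 := fun ω => le_trans (by simpa using Complex.abs_re_le_norm (g ω)) (hgb ω)
  have hgib : ∀ ω, ‖(g ω).im‖ ≤ 1 := fun ω => le_trans (by simpa using Complex.abs_im_le_norm (g ω)) (hgb ω)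
  have i1 : Integrable (fun ω => (f ω).re * (g ω).re) μ := hintmul _ _ hfr hgr hfrb hgrb
  have i2 : Integrable (fun ω => (f ω).im * (g ω).im) μ := hintmul _ _ hfi hgi hfib hgib
  have i3 : Integrable (fun ω => (f ω).re * (g ω).im) μ := hintmul _ _ hfr hgi hfrb hgib
  have i4 : Integrable (fun ω => (f ω).im * (g ω).re) μ := hintmul _ _ hfi hgr hfib hgrb
  have e1 : ∫ ω, (f ω).re * (g ω).re ∂μ = (∫ ω, (f ω).re ∂μ) * ∫ ω, (g ω).re ∂μ :=
    (h.comp Complex.measurable_re Complex.measurable_re).integral_mul_eq_mul_integral hfr hgr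
  have e2 : ∫ ω, (f ω).im * (g ω).im ∂μ = (∫ ω, (f ω).im ∂μ) * ∫ ω, (g ω).im ∂μ :=
    (h.comp Complex.measurable_im Complex.measurable_im).integral_mul_eq_mul_integral hfi hgi
  have e3 : ∫ ω, (f ω).re * (g ω).im ∂μ = (∫ ω, (f ω).re ∂μ) * ∫ ω, (g ω).im ∂μ :=
    (h.comp Complex.measurable_re Complex.measurable_im).integral_mul_eq_mul_integral hfr hgi
  have e4 : ∫ ω, (f ω).im * (g ω).re ∂μ = (∫ ω, (f ω).im ∂μ) * ∫ ω, (g ω).re ∂μ :=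
    (h.comp Complex.measurable_im Complex.measurable_re).integral_mul_eq_mul_integral hfi hgr
  have hf' := integral_re_add_im hfint
  have hg' := integral_re_add_im hgint
  have hfg' := integral_re_add_im hfgint
  simp only [RCLike.re_to_complex, RCLike.im_to_complex, RCLike.I_to_complex] at hf' hg' hfg'
  rw [← hf', ← hg', ← hfg']
  have hre' : (∫ ω, (f ω * g ω).re ∂μ)
      = (∫ ω, (f ω).re ∂μ) * (∫ ω, (g ω).re ∂μ) - (∫ ω, (f ω).im ∂μ) * ∫ ω, (g ω).im ∂μ := by
    rw [← e1, ← e2, ← integral_sub i1 i2]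
    exact integral_congr_ae (Eventually.of_forall fun ω => hre (f ω) (g ω))
  have him' : (∫ ω, (f ω * g ω).im ∂μ)
      = (∫ ω, (f ω).re ∂μ) * (∫ ω, (g ω).im ∂μ) + (∫ ω, (f ω).im ∂μ) * ∫ ω, (g ω).re ∂μ := by
    rw [← e3, ← e4, ← integral_add i3 i4]
    exact integral_congr_ae (Eventually.of_forall fun ω => him (f ω) (g ω))
  rw [hre', him']
  push_cast
  ring_nf
  simp [Complex.I_sq]
  ring

lemma my_euclid_prod {d : ℕ} (f : Fin d → ℝ → ℂ) :
    ∫ s : EuclideanSpace ℝ (Fin d), ∏ j, f j (s j) = ∏ j, ∫ u : ℝ, f j u := by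
  rw [← MeasurePreserving.integral_comp
      ((EuclideanSpace.volume_preserving_symm_measurableEquiv_toLp (Fin d)).symm _)
      (MeasurableEquiv.measurableEmbedding _)
      (fun s : EuclideanSpace ℝ (Fin d) => ∏ j, f j (s j))]
  exact MeasureTheory.integral_fintype_prod_eq_prod (fun j (u : ℝ) => f j u)

lemma my_euclid_integrable {d : ℕ} (f : Fin d → ℝ → ℝ) (hf : ∀ j, Integrable (f j)) :
    Integrable (fun s : EuclideanSpace ℝ (Fin d) => ∏ j, f j (s j)) := by
  have h := MeasureTheory.Integrable.fintype_prod_dep (f := fun j (u : ℝ) => f j u) hf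
  have := (((EuclideanSpace.volume_preserving_symm_measurableEquiv_toLp (Fin d)).symm _).integrable_comp_emb
      (MeasurableEquiv.measurableEmbedding _)
      (g := fun s : EuclideanSpace ℝ (Fin d) => ∏ j, f j (s j)))
  rw [← this]
  exact h

lemma my_char_pow {Ω : Type*} [MeasurableSpace Ω] (μ : Measure Ω) [IsProbabilityMeasure μ]
    {d : ℕ} (X : ℕ → Ω → EuclideanSpace ℝ (Fin d)) (hXmeas : ∀ i, Measurable (X i))
    (hindep : ProbabilityTheory.iIndepFun X μ)
    (hident : ∀ i, ProbabilityTheory.IdentDistrib (X i) (X 0) μ μ)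
    (s : EuclideanSpace ℝ (Fin d)) (n : ℕ) :
    ∫ ω, Complex.exp ((⟪s, ∑ i ∈ Finset.range n, X i ω⟫ : ℂ) * Complex.I) ∂μ
      = (∫ ω, Complex.exp ((⟪s, X 0 ω⟫ : ℂ) * Complex.I) ∂μ) ^ n := by
  have hφcont : Continuous (fun v : EuclideanSpace ℝ (Fin d) =>
      Complex.exp ((⟪s, v⟫ : ℂ) * Complex.I)) := by
    exact Complex.continuous_exp.comp
      ((Complex.continuous_ofReal.comp (continuous_const.inner continuous_id)).mul
        continuous_const)
  have hφm : Measurable (fun v : EuclideanSpace ℝ (Fin d) =>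
      Complex.exp ((⟪s, v⟫ : ℂ) * Complex.I)) := hφcont.measurable
  have hφb : ∀ v : EuclideanSpace ℝ (Fin d), ‖Complex.exp ((⟪s, v⟫ : ℂ) * Complex.I)‖ ≤ 1 := by
    intro v
    rw [Complex.norm_exp_ofReal_mul_I]
  induction n with
  | zero =>
      simp only [Finset.range_zero, Finset.sum_empty, pow_zero]
      have : ∀ ω : Ω, Complex.exp ((⟪s, (0 : EuclideanSpace ℝ (Fin d))⟫ : ℂ) * Complex.I) = 1 := by
        intro ω; simp [inner_zero_right]
      rw [integral_congr_ae (Eventually.of_forall fun ω => this ω)]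
      simp
  | succ n ih =>
      have hsum : ∀ ω : Ω, (∑ i ∈ Finset.range (n+1), X i ω) = (∑ i ∈ Finset.range n, X i ω) + X n ω := by
        intro ω; rw [Finset.sum_range_succ]
      have h1 : ∀ ω : Ω, Complex.exp ((⟪s, ∑ i ∈ Finset.range (n+1), X i ω⟫ : ℂ) * Complex.I)
          = Complex.exp ((⟪s, ∑ i ∈ Finset.range n, X i ω⟫ : ℂ) * Complex.I)
            * Complex.exp ((⟪s, X n ω⟫ : ℂ) * Complex.I) := by
        intro ω
        rw [hsum ω, inner_add_right, ← Complex.exp_add]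
        push_cast
        ring_nf
      rw [integral_congr_ae (Eventually.of_forall h1)]
      have hSmeas : Measurable (fun ω => ∑ i ∈ Finset.range n, X i ω) :=
        Finset.measurable_sum _ (fun i _ => hXmeas i)
      have hindepSX : IndepFun (∑ i ∈ Finset.range n, X i) (X n) μ :=
        ProbabilityTheory.iIndepFun.indepFun_finsetSum_of_notMem hindep hXmeas
          (Finset.notMem_range_self)
      have hFG : IndepFun
          (fun ω => Complex.exp ((⟪s, ∑ i ∈ Finset.range n, X i ω⟫ : ℂ) * Complex.I))
          (fun ω => Complex.exp ((⟪s, X n ω⟫ : ℂ) * Complex.I)) μ := by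
        have h2 := hindepSX.comp hφm hφm
        have heq : ((fun v : EuclideanSpace ℝ (Fin d) => Complex.exp ((⟪s, v⟫ : ℂ) * Complex.I))
            ∘ (∑ i ∈ Finset.range n, X i))
            = fun ω => Complex.exp ((⟪s, ∑ i ∈ Finset.range n, X i ω⟫ : ℂ) * Complex.I) := by
          funext ω
          simp [Function.comp, Finset.sum_apply]
        rw [heq] at h2
        exact h2
      rw [my_indep_integral_mul hFG
          ((hφm.comp hSmeas).aestronglyMeasurable)
          ((hφm.comp (hXmeas n)).aestronglyMeasurable)
          (fun ω => hφb _) (fun ω => hφb _)]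
      rw [ih]
      have hid : ∫ ω, Complex.exp ((⟪s, X n ω⟫ : ℂ) * Complex.I) ∂μ
          = ∫ ω, Complex.exp ((⟪s, X 0 ω⟫ : ℂ) * Complex.I) ∂μ :=
        ((hident n).comp hφm).integral_eq
      rw [hid, pow_succ]

end AuxLemmas

/-- Lemma `lemma-iidgamma`: smoothing bound for the probability that `S_n` lies in a cube. -/
theorem prob_cube_le_re_integral
    {Ω : Type*} [MeasurableSpace Ω] (μ : Measure Ω) [IsProbabilityMeasure μ]
    (d : ℕ) (hd : 0 < d)
    (X : ℕ → Ω → EuclideanSpace ℝ (Fin d)) (hXmeas : ∀ i, Measurable (X i))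
    (hindep : ProbabilityTheory.iIndepFun X μ)
    (hident : ∀ i, ProbabilityTheory.IdentDistrib (X i) (X 0) μ μ)
    (ε : ℝ) (hε : 0 < ε)
    (γ₀ : ℝ → ℝ) (g : ℝ → ℝ)
    (hγcont : Continuous γ₀) (hγint : Integrable γ₀) (hγnonneg : ∀ x, 0 ≤ γ₀ x)
    (hγone : ∀ x ∈ Set.Icc (-2 : ℝ) 2, 1 ≤ γ₀ x)
    (hγhat : ∀ ξ : ℝ, (∫ x : ℝ, Complex.exp (-((ξ : ℂ) * (x : ℂ)) * Complex.I) * (γ₀ x : ℂ))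
      = (g ξ : ℂ))
    (hgeven : ∀ ξ : ℝ, g (-ξ) = g ξ)
    (hgC2 : ContDiff ℝ 2 g)
    (hgsupp : Function.support g ⊆ Set.Icc (-ε) ε)
    (r₀ : ℝ → ℝ)
    (hr₀ : ∀ s : ℝ, s ≠ 0 → r₀ s = (1 / (2 * Real.pi)) * (Real.sin s / s) * g s)
    (hr₀0 : r₀ 0 = (1 / (2 * Real.pi)) * g 0) :
    ∀ n : ℕ, 1 ≤ n → ∀ x : EuclideanSpace ℝ (Fin d),
      (μ {ω | ∀ j, (∑ i ∈ Finset.range n, X i ω) j ∈ Set.Ioc (x j - 1) (x j + 1)}).toReal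
        ≤ (∫ s : EuclideanSpace ℝ (Fin d),
            Complex.exp (-(⟪s, x⟫ : ℂ) * Complex.I) * ((∏ j, r₀ (s j) : ℝ) : ℂ)
              * (∫ ω, Complex.exp ((⟪s, X 0 ω⟫ : ℂ) * Complex.I) ∂μ) ^ n).re := by
  intro n hn x
  -- basic facts about g and r₀
  have hgcont : Continuous g := hgC2.continuous
  have hgK : HasCompactSupport g := by
    refine HasCompactSupport.intro (isCompact_Icc (a := -ε) (b := ε)) (fun t ht => ?_)
    by_contra h
    exact ht (hgsupp h)
  have hr₀eq : r₀ = fun s => (1 / (2 * Real.pi)) * mysinc s * g s := by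
    funext s
    rcases eq_or_ne s 0 with rfl | hs
    · simp [mysinc, hr₀0]
    · simp [mysinc, hs, hr₀ s hs]
  have hr₀cont : Continuous r₀ := by
    rw [hr₀eq]
    exact (continuous_const.mul mysinc_cont).mul hgcont
  have hr₀K : HasCompactSupport r₀ := by
    refine HasCompactSupport.intro (isCompact_Icc (a := -ε) (b := ε)) (fun t ht => ?_)
    have hg0 : g t = 0 := by
      by_contra h
      exact ht (hgsupp h)
    rw [hr₀eq]
    simp [hg0]
  have hr₀int : Integrable r₀ := hr₀cont.integrable_of_hasCompactSupport hr₀K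
  -- the smoothing function F
  set F : ℝ → ℝ := fun a => (1/2 : ℝ) * ∫ t in Set.Ioc (a-1) (a+1), γ₀ t with hF
  have hFnonneg : ∀ a, 0 ≤ F a := by
    intro a
    apply mul_nonneg (by norm_num)
    exact setIntegral_nonneg measurableSet_Ioc (fun t _ => hγnonneg t)
  have hFge1 : ∀ a : ℝ, -1 < a → a ≤ 1 → 1 ≤ F a := by
    intro a h1 h2
    have hconst : (1:ℝ) = (1/2 : ℝ) * ∫ t in Set.Ioc (a-1) (a+1), (1:ℝ) := by
      rw [setIntegral_const, measureReal_def, Real.volume_Ioc, smul_eq_mul, mul_one]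
      rw [ENNReal.toReal_ofReal (by linarith : (0:ℝ) ≤ (a+1) - (a-1))]
      ring_nf
    rw [hconst, hF]
    have : (∫ t in Set.Ioc (a-1) (a+1), (1:ℝ)) ≤ ∫ t in Set.Ioc (a-1) (a+1), γ₀ t := by
      refine setIntegral_mono_on (integrableOn_const measure_Ioc_lt_top.ne)
        hγint.integrableOn measurableSet_Ioc (fun t ht => ?_)
      exact hγone t ⟨by rcases ht with ⟨ht1, ht2⟩; linarith, by rcases ht with ⟨ht1, ht2⟩; linarith⟩
    linarith
  -- the sum
  set S : Ω → EuclideanSpace ℝ (Fin d) := fun ω => ∑ i ∈ Finset.range n, X i ω with hSdef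
  have hSmeas : Measurable S := Finset.measurable_sum _ (fun i _ => hXmeas i)
  -- relating F to the oscillatory integral (1-d key lemma)
  have hkey : ∀ a : ℝ, (F a : ℂ) = ∫ s : ℝ, (r₀ s : ℂ) * Complex.exp ((s:ℂ) * (a:ℂ) * Complex.I) := by
    intro a
    have h0 : F a = (1/2:ℝ) * ∫ t in Set.Ioc (a-1) (a+1), γ₀ t := rfl
    have h1 : ((∫ t in Set.Ioc (a-1) (a+1), γ₀ t : ℝ) : ℂ)
        = ∫ t in Set.Ioc (a-1) (a+1), (γ₀ t : ℂ) :=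
      (integral_ofReal (𝕜 := ℂ) (f := fun t => γ₀ t)).symm
    rw [h0, Complex.ofReal_mul, h1]
    exact my_key γ₀ g r₀ hγcont hγint hγhat hgcont hgK hr₀ a
  -- the event
  set A : Set Ω := {ω | ∀ j, S ω j ∈ Set.Ioc (x j - 1) (x j + 1)} with hA
  have hAmeas : MeasurableSet A := by
    have : A = ⋂ j, {ω | S ω j ∈ Set.Ioc (x j - 1) (x j + 1)} := by
      ext ω; simp [hA, Set.mem_iInter]
    rw [this]
    refine MeasurableSet.iInter (fun j => ?_)
    exact ((measurable_pi_apply j).comp ((WithLp.measurable_ofLp 2 _).comp hSmeas)) measurableSet_Ioc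
  -- step 1 : measure as integral of indicator
  have step1 : (μ A).toReal = ∫ ω, A.indicator (fun _ => (1:ℝ)) ω ∂μ := by
    rw [integral_indicator hAmeas, setIntegral_const, smul_eq_mul, mul_one]
    rfl
  -- the function W
  set W : Ω → ℝ := fun ω => ∏ j, F (S ω j - x j) with hW
  have step2 : ∀ ω, A.indicator (fun _ => (1:ℝ)) ω ≤ W ω := by
    intro ω
    by_cases hω : ω ∈ A
    · rw [Set.indicator_of_mem hω]
      have : (1:ℝ) = ∏ _j : Fin d, (1:ℝ) := by simp
      rw [this, hW]
      refine Finset.prod_le_prod (fun j _ => zero_le_one) (fun j _ => ?_)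
      have hj := hω j
      rcases hj with ⟨hj1, hj2⟩
      exact hFge1 _ (by linarith) (by linarith)
    · rw [Set.indicator_of_notMem hω]
      exact Finset.prod_nonneg (fun j _ => hFnonneg _)
  -- product splitting on the Euclidean space
  have hinner : ∀ (s y : EuclideanSpace ℝ (Fin d)), (⟪s, y⟫ : ℝ) = ∑ j, s j * y j := by
    intro s y
    rw [PiLp.inner_apply]
    simp [RCLike.inner_apply, conj_trivial, mul_comm]
  have hprodsplit : ∀ (s y : EuclideanSpace ℝ (Fin d)),
      (∏ j, ((r₀ (s j) : ℂ) * Complex.exp ((s j : ℂ) * ((y j - x j : ℝ) : ℂ) * Complex.I)))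
        = (∏ j, (r₀ (s j) : ℂ)) * Complex.exp ((⟪s, y⟫ : ℂ) * Complex.I)
          * Complex.exp (-(⟪s, x⟫ : ℂ) * Complex.I) := by
    intro s y
    rw [Finset.prod_mul_distrib]
    rw [mul_assoc, ← Complex.exp_add, ← Complex.exp_sum]
    congr 1
    rw [hinner s y, hinner s x]
    have hterm : ∀ j : Fin d, ((s j : ℂ) * ((y j - x j : ℝ) : ℂ) * Complex.I)
        = ((s j * y j : ℝ) : ℂ) * Complex.I - ((s j * x j : ℝ) : ℂ) * Complex.I := by
      intro j; push_cast; ring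
    rw [Finset.sum_congr rfl (fun j _ => hterm j), Finset.sum_sub_distrib]
    rw [← Finset.sum_mul, ← Finset.sum_mul]
    push_cast
    ring
  -- the two-variable integrand
  set Φ : Ω → EuclideanSpace ℝ (Fin d) → ℂ := fun ω s =>
    (∏ j, (r₀ (s j) : ℂ)) * Complex.exp ((⟪s, S ω⟫ : ℂ) * Complex.I)
      * Complex.exp (-(⟪s, x⟫ : ℂ) * Complex.I) with hΦ
  -- measurability of the uncurried integrand
  have hRcont : Continuous (fun s : EuclideanSpace ℝ (Fin d) => (∏ j, (r₀ (s j) : ℂ))) := by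
    refine continuous_finset_prod _ (fun j _ => ?_)
    exact Complex.continuous_ofReal.comp (hr₀cont.comp (by fun_prop : Continuous fun s : EuclideanSpace ℝ (Fin d) => s j))
  have hΦmeas : AEStronglyMeasurable (Function.uncurry Φ)
      (μ.prod (volume : Measure (EuclideanSpace ℝ (Fin d)))) := by
    apply Measurable.aestronglyMeasurable
    have h1 : Measurable (fun p : Ω × EuclideanSpace ℝ (Fin d) => (∏ j, (r₀ (p.2 j) : ℂ))) :=
      (hRcont.measurable).comp measurable_snd
    have h2 : Measurable (fun p : Ω × EuclideanSpace ℝ (Fin d) => (⟪p.2, S p.1⟫ : ℝ)) := by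
      have hc : Continuous (fun q : EuclideanSpace ℝ (Fin d) × EuclideanSpace ℝ (Fin d) =>
          (⟪q.1, q.2⟫ : ℝ)) := continuous_inner
      exact hc.measurable.comp (measurable_snd.prodMk (hSmeas.comp measurable_fst))
    have h3 : Measurable (fun p : Ω × EuclideanSpace ℝ (Fin d) =>
        Complex.exp ((⟪p.2, S p.1⟫ : ℂ) * Complex.I)) := by
      apply Complex.measurable_exp.comp
      exact (Complex.measurable_ofReal.comp h2).mul measurable_const
    have h4 : Measurable (fun p : Ω × EuclideanSpace ℝ (Fin d) =>
        Complex.exp (-(⟪p.2, x⟫ : ℂ) * Complex.I)) := by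
      have hc : Continuous (fun s : EuclideanSpace ℝ (Fin d) =>
          Complex.exp (-(⟪s, x⟫ : ℂ) * Complex.I)) := by
        apply Complex.continuous_exp.comp
        exact ((Complex.continuous_ofReal.comp (continuous_id.inner continuous_const)).neg).mul
          continuous_const
      exact hc.measurable.comp measurable_snd
    exact (h1.mul h3).mul h4
  -- integrability of the uncurried integrand
  have hRabs_int : Integrable (fun s : EuclideanSpace ℝ (Fin d) => ∏ j, |r₀ (s j)|) :=
    my_euclid_integrable (fun _ u => |r₀ u|) (fun _ => hr₀int.abs)
  have hΦint : Integrable (Function.uncurry Φ)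
      (μ.prod (volume : Measure (EuclideanSpace ℝ (Fin d)))) := by
    have hdom : Integrable (fun p : Ω × EuclideanSpace ℝ (Fin d) =>
        (1:ℝ) * (∏ j, |r₀ (p.2 j)|)) (μ.prod volume) :=
      Integrable.mul_prod (f := fun _ : Ω => (1:ℝ))
        (g := fun s : EuclideanSpace ℝ (Fin d) => ∏ j, |r₀ (s j)|)
        (integrable_const 1) hRabs_int
    refine hdom.mono' hΦmeas (Eventually.of_forall fun p => ?_)
    rw [one_mul]
    have hb1 : ‖Complex.exp ((⟪p.2, S p.1⟫ : ℂ) * Complex.I)‖ = 1 := by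
      rw [Complex.norm_exp_ofReal_mul_I]
    have hb2 : ‖Complex.exp (-(⟪p.2, x⟫ : ℂ) * Complex.I)‖ = 1 := by
      have : (-(⟪p.2, x⟫ : ℂ) * Complex.I) = ((-⟪p.2, x⟫ : ℝ) : ℂ) * Complex.I := by push_cast; ring
      rw [this, Complex.norm_exp_ofReal_mul_I]
    calc ‖Function.uncurry Φ p‖
        = ‖(∏ j, (r₀ (p.2 j) : ℂ))‖ * ‖Complex.exp ((⟪p.2, S p.1⟫ : ℂ) * Complex.I)‖
            * ‖Complex.exp (-(⟪p.2, x⟫ : ℂ) * Complex.I)‖ := by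
          simp [Function.uncurry, hΦ, norm_mul]
      _ = ‖(∏ j, (r₀ (p.2 j) : ℂ))‖ := by rw [hb1, hb2, mul_one, mul_one]
      _ = ∏ j, |r₀ (p.2 j)| := by
          rw [norm_prod]
          exact Finset.prod_congr rfl (fun j _ => by
            rw [Complex.norm_real, Real.norm_eq_abs])
      _ ≤ ∏ j, |r₀ (p.2 j)| := le_rfl
  -- W equals the real part of the inner integral
  have hWeq : ∀ ω, W ω = (∫ s : EuclideanSpace ℝ (Fin d), Φ ω s).re := by
    intro ω
    have hc : ((W ω : ℝ) : ℂ) = ∫ s : EuclideanSpace ℝ (Fin d), Φ ω s := by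
      rw [hW]
      push_cast
      calc (∏ j, ((F (S ω j - x j) : ℝ) : ℂ))
          = ∏ j, ∫ u : ℝ, (r₀ u : ℂ) * Complex.exp ((u:ℂ) * ((S ω j - x j : ℝ):ℂ) * Complex.I) := by
            exact Finset.prod_congr rfl (fun j _ => hkey (S ω j - x j))
        _ = ∫ s : EuclideanSpace ℝ (Fin d), ∏ j,
              ((r₀ (s j) : ℂ) * Complex.exp ((s j : ℂ) * ((S ω j - x j : ℝ):ℂ) * Complex.I)) :=
            (my_euclid_prod (fun j (u : ℝ) =>
              (r₀ u : ℂ) * Complex.exp ((u:ℂ) * ((S ω j - x j : ℝ):ℂ) * Complex.I))).symm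
        _ = ∫ s : EuclideanSpace ℝ (Fin d), Φ ω s := by
            refine integral_congr_ae (Eventually.of_forall fun s => ?_)
            exact hprodsplit s (S ω)
    rw [← hc]
    simp
  -- step 3: integrate W
  have hWint : Integrable W μ := by
    have h1 : Integrable (fun ω => ∫ s : EuclideanSpace ℝ (Fin d), Φ ω s) μ :=
      hΦint.integral_prod_left
    exact (h1.re).congr (Eventually.of_forall fun ω => (hWeq ω).symm)
  have step3 : ∫ ω, W ω ∂μ
      = (∫ ω, ∫ s : EuclideanSpace ℝ (Fin d), Φ ω s ∂volume ∂μ).re := by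
    have h1 : Integrable (fun ω => ∫ s : EuclideanSpace ℝ (Fin d), Φ ω s) μ :=
      hΦint.integral_prod_left
    have h2 := integral_re h1
    simp only [RCLike.re_to_complex] at h2
    rw [← h2]
    exact integral_congr_ae (Eventually.of_forall fun ω => hWeq ω)
  -- step 4: Fubini
  have step4 : (∫ ω, ∫ s : EuclideanSpace ℝ (Fin d), Φ ω s ∂volume ∂μ)
      = ∫ s : EuclideanSpace ℝ (Fin d), ∫ ω, Φ ω s ∂μ ∂volume :=
    integral_integral_swap hΦint
  -- step 5: evaluate the inner integral using independence
  have step5 : ∀ s : EuclideanSpace ℝ (Fin d),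
      (∫ ω, Φ ω s ∂μ)
        = Complex.exp (-(⟪s, x⟫ : ℂ) * Complex.I) * ((∏ j, r₀ (s j) : ℝ) : ℂ)
            * (∫ ω, Complex.exp ((⟪s, X 0 ω⟫ : ℂ) * Complex.I) ∂μ) ^ n := by
    intro s
    have h1 : (∫ ω, Φ ω s ∂μ)
        = ((∏ j, (r₀ (s j) : ℂ)) * Complex.exp (-(⟪s, x⟫ : ℂ) * Complex.I))
            * ∫ ω, Complex.exp ((⟪s, S ω⟫ : ℂ) * Complex.I) ∂μ := by
      rw [← MeasureTheory.integral_const_mul]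
      refine integral_congr_ae (Eventually.of_forall fun ω => ?_)
      rw [hΦ]
      ring
    rw [h1, hSdef]
    rw [my_char_pow μ X hXmeas hindep hident s n]
    rw [Complex.ofReal_prod]
    ring
  -- put everything together
  rw [step1]
  have hle : ∫ ω, A.indicator (fun _ => (1:ℝ)) ω ∂μ ≤ ∫ ω, W ω ∂μ :=
    integral_mono_of_nonneg
      (Eventually.of_forall fun ω => Set.indicator_nonneg (fun _ _ => zero_le_one) ω)
      hWint (Eventually.of_forall step2)
  refine le_trans hle ?_
  rw [step3, step4]
  rw [integral_congr_ae (Eventually.of_forall step5)]
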